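/- Let K ⊂ ℝⁿ be a convex body containing r·B₂ⁿ for some r ∈ (0,1], covered as K ⊂ ⋃_{i=1}^N (x_i + B₂ⁿ) with x₁,…,x_N ∈ ℝⁿ. Let ε ∈ (0,1) and suppose θ ∈ S^{n−1} satisfies |⟨x_i/|x_i|, θ⟩| ≤ ε for every i with x_i ≠ 0. Then for every unit vector u with h_K(u) = ⟨u, ρ_K(θ)·θ⟩ (i.e. u in the normal cone of K at ρ_K(θ)·θ), one has ⟨u, θ⟩ ≥ r·√(1−ε²). -/
import Mathlib


open Metric Set MeasureTheory
open scoped RealInnerProductSpace ENNReal Pointwise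

abbrev Euc (n : ℕ) := EuclideanSpace ℝ (Fin n)

/-- The covering number `N(K, T)`: the minimal number of translates of `T`
needed to cover `K`. -/
noncomputable def coveringNumber {n : ℕ} (K T : Set (Euc n)) : ℕ :=
  sInf {N : ℕ | ∃ x : Fin N → Euc n, K ⊆ ⋃ i, x i +ᵥ T}

/-- The radial function `ρ_K(θ) = sup {t ≥ 0 : tθ ∈ K}`. -/
noncomputable def radialFn {n : ℕ} (K : Set (Euc n)) (θ : Euc n) : ℝ :=
  sSup {t : ℝ | 0 ≤ t ∧ t • θ ∈ K}

/-- The support function `h_K(u) = sup {⟨x, u⟩ : x ∈ K}`. -/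
noncomputable def suppFn {n : ℕ} (K : Set (Euc n)) (u : Euc n) : ℝ :=
  sSup ((fun x => ⟪x, u⟫) '' K)

/-- `F` is a facet of `P ⊆ ℝⁿ`: a nonempty exposed face of dimension `n - 1`. -/
def IsFacet {n : ℕ} (P F : Set (Euc n)) : Prop :=
  F.Nonempty ∧ IsExposed ℝ P F ∧ Module.finrank ℝ (vectorSpan ℝ F) = n - 1


/-- Let `K ⊆ ℝⁿ` be a convex body containing `r·B₂ⁿ` for some `r ∈ (0,1]`, covered by
unit balls centered at `x₁, …, x_N`. Let `ε ∈ (0,1)` and `θ ∈ S^{n−1}` be `ε`-orthogonal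
to every normalized center. Then every unit vector `u` in the normal cone of `K` at
`ρ_K(θ)·θ`, i.e. every unit `u` with `h_K(u) = ⟨u, ρ_K(θ)·θ⟩`, satisfies
`⟨u, θ⟩ ≥ r√(1−ε²)`. -/
theorem gauss_map_close_to_id_of_cover {n : ℕ}
    (K : Set (Euc n)) (hKcomp : IsCompact K) (hKconv : Convex ℝ K)
    (r : ℝ) (hr : r ∈ Set.Ioc (0 : ℝ) 1) (hball : closedBall (0 : Euc n) r ⊆ K)
    (N : ℕ) (x : Fin N → Euc n)
    (hcover : K ⊆ ⋃ i, x i +ᵥ closedBall (0 : Euc n) 1)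
    (ε : ℝ) (hε : ε ∈ Set.Ioo (0 : ℝ) 1)
    (θ : Euc n) (hθ : θ ∈ sphere (0 : Euc n) 1)
    (hortho : ∀ i, x i ≠ 0 → |⟪‖x i‖⁻¹ • x i, θ⟫| ≤ ε)
    (u : Euc n) (hu : u ∈ sphere (0 : Euc n) 1)
    (hnormal : suppFn K u = ⟪u, radialFn K θ • θ⟫) :
    r * Real.sqrt (1 - ε ^ 2) ≤ ⟪u, θ⟫ := by

  simp only [mem_sphere_zero_iff_norm] at hθ hu
  obtain ⟨hr0, hr1⟩ := hr
  obtain ⟨hε0, hε1⟩ := hε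
  -- the set defining the radial function
  set S : Set ℝ := {t : ℝ | 0 ≤ t ∧ t • θ ∈ K} with hSdef
  obtain ⟨R, hR⟩ := hKcomp.isBounded.subset_closedBall 0
  have hSsub : S ⊆ Set.Icc 0 R := by
    rintro t ⟨ht0, htK⟩
    refine ⟨ht0, ?_⟩
    have := hR htK
    simpa [mem_closedBall, dist_zero_right, norm_smul, hθ, abs_of_nonneg ht0] using this
  have hSclosed : IsClosed S := by
    have hEq : S = Set.Ici (0:ℝ) ∩ (fun t : ℝ => t • θ) ⁻¹' K := rfl
    rw [hEq]
    exact isClosed_Ici.inter (hKcomp.isClosed.preimage (continuous_id.smul continuous_const))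
  have hScomp : IsCompact S := isCompact_Icc.of_isClosed_subset hSclosed hSsub
  have hrS : r ∈ S := ⟨hr0.le, hball (by simp [norm_smul, hθ, abs_of_nonneg hr0.le])⟩
  set ρ := radialFn K θ with hρdef
  have hρS : ρ ∈ S := hScomp.sSup_mem ⟨r, hrS⟩
  have hρr : r ≤ ρ := le_csSup hScomp.bddAbove hrS
  have hρpos : 0 < ρ := lt_of_lt_of_le hr0 hρr
  have hpK : ρ • θ ∈ K := hρS.2
  -- support function lower bound
  have hruK : r • u ∈ K := hball (by simp [norm_smul, hu, abs_of_nonneg hr0.le])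
  have hsupp : r ≤ suppFn K u := by
    have h1 : r = ⟪r • u, u⟫ := by
      rw [real_inner_smul_left, real_inner_self_eq_norm_sq, hu]; ring
    rw [h1]
    exact le_csSup ((hKcomp.image (continuous_id.inner continuous_const)).bddAbove) ⟨r • u, hruK, rfl⟩
  have hkey : r ≤ ρ * ⟪u, θ⟫ := by
    have h2 := hnormal ▸ hsupp
    rwa [real_inner_smul_right] at h2
  -- covering point
  obtain ⟨i, hi⟩ := Set.mem_iUnion.mp (hcover hpK)
  obtain ⟨b, hb, hbe⟩ := hi
  have hdist : ‖ρ • θ - x i‖ ≤ 1 := by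
    have hbval : b = ρ • θ - x i := by
      have : x i + b = ρ • θ := hbe
      linear_combination (norm := module) this
    rw [← hbval]
    simpa [mem_closedBall, dist_zero_right] using hb
  have hρ2 : ρ ^ 2 * (1 - ε ^ 2) ≤ 1 := by
    by_cases hx : x i = 0
    · have hρ1 : ρ ≤ 1 := by
        have h3 := hdist
        rw [hx, sub_zero] at h3
        calc ρ = ‖ρ • θ‖ := by simp [norm_smul, hθ, abs_of_nonneg hρpos.le]
        _ ≤ 1 := h3
      nlinarith [sq_nonneg ε, hρpos]
    · have hxn : 0 < ‖x i‖ := norm_pos_iff.mpr hx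
      have ha : |⟪x i, θ⟫| ≤ ε * ‖x i‖ := by
        have h4 := hortho i hx
        rw [real_inner_smul_left, abs_mul, abs_inv, abs_norm] at h4
        calc |⟪x i, θ⟫| = ‖x i‖ * (‖x i‖⁻¹ * |⟪x i, θ⟫|) := by field_simp
        _ ≤ ‖x i‖ * ε := mul_le_mul_of_nonneg_left h4 hxn.le
        _ = ε * ‖x i‖ := mul_comm _ _
      have hexp : ρ ^ 2 - 2 * (ρ * ⟪x i, θ⟫) + ‖x i‖ ^ 2 ≤ 1 := by
        have h1 : ‖ρ • θ - x i‖ ^ 2 ≤ 1 := by nlinarith [norm_nonneg (ρ • θ - x i)]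
        rw [norm_sub_sq_real, real_inner_smul_left, norm_smul, hθ,
          real_inner_comm (x i) θ, Real.norm_eq_abs, abs_of_nonneg hρpos.le] at h1
        linarith
      have habs := abs_le.mp ha
      nlinarith [sq_nonneg (ρ * ε - ‖x i‖), hρpos.le, habs.2]
  -- finish
  set s := Real.sqrt (1 - ε ^ 2) with hsdef
  have hs0 : 0 ≤ s := Real.sqrt_nonneg _
  have hs2 : s ^ 2 = 1 - ε ^ 2 := Real.sq_sqrt (by nlinarith)
  have hρs : ρ * s ≤ 1 := by nlinarith [mul_nonneg hρpos.le hs0]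
  have hcpos : 0 < ⟪u, θ⟫ := by nlinarith
  nlinarith [mul_le_mul hρs (le_refl ⟪u, θ⟫) hcpos.le zero_le_one, hkey, mul_nonneg hr0.le hs0]
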